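/- arXiv:2107.05774 — 3 statements merged into one kernel-verified Lean document; each statement's English description precedes it below -/
import Mathlib

section
/- Let k ≥ 1 and let p1 and p2 be two distinct primitive polynomials of degree k over GF(2), and let n ≥ 2k. Then the truncated PR codes S(p1,n) and S(p2,n) have no nonzero codeword in common, i.e., S(p1,n) ∩ S(p2,n) = {0}. -/
/-- The truncated primitive rateless (PR) code `S(p,n)` for a polynomial `p` of degree `k`
over `GF(2)`: the set of vectors `c ∈ GF(2)^n` satisfying the linear recurrence
`∑_{i=0}^k p_i c_{j+i} = 0` for every `j` with `0 ≤ j ≤ n - k - 1`. -/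
def PRcode (k : ℕ) (p : Polynomial (ZMod 2)) (n : ℕ) : Set (Fin n → ZMod 2) :=
  {c | ∀ j : ℕ, j + k < n →
    ∑ i ∈ Finset.range (k + 1), p.coeff i * (if h : j + i < n then c ⟨j + i, h⟩ else 0) = 0}

/-- `p` is a primitive polynomial of degree `k` over `GF(2)`: it is the minimal polynomial of
some element `α` of `GF(2^k)` of multiplicative order `2^k - 1`. -/
def IsPrimitivePoly (k : ℕ) (p : Polynomial (ZMod 2)) : Prop :=
  ∃ α : GaloisField 2 k, orderOf α = 2 ^ k - 1 ∧ p = minpoly (ZMod 2) α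

open Polynomial Finset

-- Step lemma 1: Φ(p * X^s) = 0
lemma phiA (n k : ℕ) (f : ℕ → ZMod 2) (p : Polynomial (ZMod 2)) (hdeg : p.natDegree ≤ k)
    (hrec : ∀ j : ℕ, j + k < n → ∑ i ∈ Finset.range (k+1), p.coeff i * f (j+i) = 0)
    (s : ℕ) (hs : s + k < n) :
    ∑ j ∈ Finset.range n, (p * Polynomial.X ^ s).coeff j * f j = 0 := by
  have hsub : Finset.Ico s (s + (k+1)) ⊆ Finset.range n := by
    intro x hx
    simp only [Finset.mem_Ico] at hx
    exact Finset.mem_range.mpr (by omega)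
  have hvan : ∀ x ∈ Finset.range n, x ∉ Finset.Ico s (s + (k+1)) →
      (p * Polynomial.X ^ s).coeff x * f x = 0 := by
    intro x _ hnx
    simp only [Finset.mem_Ico, not_and, not_lt] at hnx
    rw [Polynomial.coeff_mul_X_pow']
    by_cases hxs : s ≤ x
    · rw [if_pos hxs, Polynomial.coeff_eq_zero_of_natDegree_lt (by have := hnx hxs; omega),
        zero_mul]
    · rw [if_neg hxs, zero_mul]
  rw [← Finset.sum_subset hsub hvan, Finset.sum_Ico_eq_sum_range]
  have h2 : s + (k+1) - s = k + 1 := by omega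
  rw [h2]
  have hcg : ∀ i ∈ Finset.range (k+1),
      (p * Polynomial.X ^ s).coeff (s + i) * f (s + i) = p.coeff i * f (s + i) := by
    intro i _
    rw [Polynomial.coeff_mul_X_pow']
    simp
  rw [Finset.sum_congr rfl hcg]
  exact hrec s hs

-- Step lemma 2: Φ(r * p) = 0 for deg r + k < n
lemma phiB (n k : ℕ) (f : ℕ → ZMod 2) (p : Polynomial (ZMod 2)) (hdeg : p.natDegree ≤ k)
    (hrec : ∀ j : ℕ, j + k < n → ∑ i ∈ Finset.range (k+1), p.coeff i * f (j+i) = 0)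
    (r : Polynomial (ZMod 2)) (hr : r.natDegree + k < n) :
    ∑ j ∈ Finset.range n, (r * p).coeff j * f j = 0 := by
  have hsplit : r * p = ∑ s ∈ Finset.range (r.natDegree + 1),
      Polynomial.C (r.coeff s) * (p * Polynomial.X ^ s) := by
    conv_lhs => rw [r.as_sum_range_C_mul_X_pow]
    rw [Finset.sum_mul]
    exact Finset.sum_congr rfl fun s _ => by ring
  rw [hsplit]
  simp_rw [Polynomial.finset_sum_coeff, Finset.sum_mul]
  rw [Finset.sum_comm]
  apply Finset.sum_eq_zero
  intro s hs
  simp_rw [Polynomial.coeff_C_mul, mul_assoc]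
  rw [← Finset.mul_sum,
    phiA n k f p hdeg hrec s (by simp only [Finset.mem_range] at hs; omega), mul_zero]

-- Step lemma 3: Φ(X^m) = f m
lemma phiC (n m : ℕ) (f : ℕ → ZMod 2) (hm : m < n) :
    ∑ j ∈ Finset.range n, (Polynomial.X ^ m : Polynomial (ZMod 2)).coeff j * f j = f m := by
  simp_rw [Polynomial.coeff_X_pow, ite_mul, one_mul, zero_mul]
  rw [Finset.sum_ite_eq' (Finset.range n) m f]
  simp [hm]

lemma primitive_facts (k : ℕ) (hk : 1 ≤ k) (p : Polynomial (ZMod 2))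
    (h : IsPrimitivePoly k p) : p.Monic ∧ p.natDegree = k ∧ Irreducible p := by
  obtain ⟨α, hα, rfl⟩ := h
  have hint : IsIntegral (ZMod 2) α := IsIntegral.of_finite _ _
  refine ⟨minpoly.monic hint, ?_, minpoly.irreducible hint⟩
  have hfr : Module.finrank (ZMod 2) (GaloisField 2 k) = k := GaloisField.finrank 2 (by omega)
  have hα0 : α ≠ 0 := by
    intro h0
    have hpow := pow_orderOf_eq_one α
    have h2k : 2 ≤ 2 ^ k := by
      calc 2 = 2 ^ 1 := (pow_one 2).symm
      _ ≤ 2 ^ k := Nat.pow_le_pow_right (by norm_num) hk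
    rw [hα, h0, zero_pow (by omega)] at hpow
    exact zero_ne_one hpow
  set u : (GaloisField 2 k)ˣ := Units.mk0 α hα0 with hu
  have hou : orderOf u = 2 ^ k - 1 := by rw [← orderOf_units, hu, Units.val_mk0]; exact hα
  have hcardu : Nat.card (GaloisField 2 k)ˣ = 2 ^ k - 1 := by
    rw [Nat.card_units, GaloisField.card 2 k (by omega)]
  have htop : Subgroup.zpowers u = ⊤ :=
    Subgroup.eq_top_of_card_eq _ (by rw [Nat.card_zpowers, hou, hcardu])
  have hadj : IntermediateField.adjoin (ZMod 2) {α} = ⊤ := by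
    rw [eq_top_iff]
    intro x _
    by_cases hx0 : x = 0
    · rw [hx0]; exact zero_mem _
    · have hmem : Units.mk0 x hx0 ∈ Subgroup.zpowers u := htop ▸ Subgroup.mem_top _
      rw [← mem_powers_iff_mem_zpowers] at hmem
      obtain ⟨m, hm⟩ := hmem
      have hxm : α ^ m = x := by
        have := congrArg (Units.val) hm
        simpa [hu] using this
      rw [← hxm]
      exact pow_mem (IntermediateField.mem_adjoin_simple_self (ZMod 2) α) m
  rw [← IntermediateField.adjoin.finrank hint, hadj, IntermediateField.finrank_top', hfr]

def extFun (n : ℕ) (c : Fin n → ZMod 2) : ℕ → ZMod 2 :=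
  fun j => if h : j < n then c ⟨j, h⟩ else 0

theorem stmt0 (k n : ℕ) (hk : 1 ≤ k) (hn : 2 * k ≤ n)
    (p1 p2 : Polynomial (ZMod 2))
    (h1 : IsPrimitivePoly k p1) (h2 : IsPrimitivePoly k p2) (hne : p1 ≠ p2) :
    PRcode k p1 n ∩ PRcode k p2 n = {0} := by
  obtain ⟨hmon1, hdeg1, hirr1⟩ := primitive_facts k hk p1 h1
  obtain ⟨hmon2, hdeg2, hirr2⟩ := primitive_facts k hk p2 h2
  set q : Polynomial (ZMod 2) := p1 - p2 with hqdef
  have hq0 : q ≠ 0 := sub_ne_zero.mpr hne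
  have hp10 : p1 ≠ 0 := hmon1.ne_zero
  have hdegq : q.natDegree < k := by
    have hdlt : q.degree < p1.degree := by
      apply Polynomial.degree_sub_lt
      · rw [Polynomial.degree_eq_natDegree hp10, Polynomial.degree_eq_natDegree hmon2.ne_zero,
          hdeg1, hdeg2]
      · exact hp10
      · rw [hmon1.leadingCoeff, hmon2.leadingCoeff]
    rw [Polynomial.degree_eq_natDegree hp10, hdeg1] at hdlt
    exact (Polynomial.natDegree_lt_iff_degree_lt hq0).mpr hdlt
  have hcop : IsCoprime p1 q := by
    rw [hirr1.coprime_iff_not_dvd]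
    intro hdvd
    have := Polynomial.natDegree_le_of_dvd hdvd hq0
    omega
  ext c
  simp only [Set.mem_inter_iff, Set.mem_singleton_iff]
  constructor
  · rintro ⟨hc1, hc2⟩
    set f : ℕ → ZMod 2 := extFun n c with hf
    have rec1 : ∀ j : ℕ, j + k < n →
        ∑ i ∈ Finset.range (k+1), p1.coeff i * f (j+i) = 0 := fun j hj => hc1 j hj
    have rec2 : ∀ j : ℕ, j + k < n →
        ∑ i ∈ Finset.range (k+1), p2.coeff i * f (j+i) = 0 := fun j hj => hc2 j hj
    have recq : ∀ j : ℕ, j + k < n →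
        ∑ i ∈ Finset.range (k+1), q.coeff i * f (j+i) = 0 := by
      intro j hj
      simp only [hqdef, Polynomial.coeff_sub, sub_mul]
      rw [Finset.sum_sub_distrib, rec1 j hj, rec2 j hj, sub_zero]
    -- f m = 0 for m < k, via Bezout
    have key1 : ∀ m, m < k → f m = 0 := by
      intro m hm
      obtain ⟨u, v, huv⟩ := hcop
      set t : Polynomial (ZMod 2) := (Polynomial.X ^ m * v) /ₘ p1 with ht
      set b : Polynomial (ZMod 2) := (Polynomial.X ^ m * v) %ₘ p1 with hb
      have hmod : b + p1 * t = Polynomial.X ^ m * v := Polynomial.modByMonic_add_div _ p1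
      set a : Polynomial (ZMod 2) := Polynomial.X ^ m * u + q * t with ha
      have hkey : a * p1 + b * q = Polynomial.X ^ m := by
        have e1 : a * p1 + b * q = Polynomial.X ^ m * (u * p1) + (p1 * t + b) * q := by ring
        rw [e1, add_comm (p1 * t) b, hmod]
        calc Polynomial.X ^ m * (u * p1) + Polynomial.X ^ m * v * q
            = Polynomial.X ^ m * (u * p1 + v * q) := by ring
          _ = Polynomial.X ^ m := by rw [huv, mul_one]
      -- degree bounds
      have hbdeg : b.natDegree < k := by
        by_cases hb0 : b = 0
        · rw [hb0]; simpa using (by omega : 0 < k)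
        · rw [Polynomial.natDegree_lt_iff_degree_lt hb0]
          have := Polynomial.degree_modByMonic_lt (Polynomial.X ^ m * v) hmon1
          rwa [Polynomial.degree_eq_natDegree hp10, hdeg1] at this
      have hadeg : a.natDegree + k < n := by
        by_cases ha0 : a = 0
        · rw [ha0]; simp; omega
        · have hap : a * p1 = Polynomial.X ^ m - b * q := by
            rw [eq_sub_iff_add_eq]; exact hkey
          have h1' : (a * p1).natDegree = a.natDegree + k := by
            rw [Polynomial.natDegree_mul ha0 hp10, hdeg1]
          have h2' : (Polynomial.X ^ m - b * q).natDegree ≤ 2 * k - 2 := by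
            refine le_trans (Polynomial.natDegree_sub_le _ _) ?_
            have hxm : (Polynomial.X ^ m : Polynomial (ZMod 2)).natDegree = m :=
              Polynomial.natDegree_X_pow m
            have hbq : (b * q).natDegree ≤ b.natDegree + q.natDegree :=
              Polynomial.natDegree_mul_le
            rw [max_le_iff, hxm]
            omega
          rw [hap] at h1'
          omega
      -- conclude f m = 0
      have hΦ1 : ∑ j ∈ Finset.range n, (a * p1).coeff j * f j = 0 :=
        phiB n k f p1 (le_of_eq hdeg1) rec1 a hadeg
      have hΦ2 : ∑ j ∈ Finset.range n, (b * q).coeff j * f j = 0 :=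
        phiB n k f q (by omega : q.natDegree ≤ k) recq b (by omega)
      have := phiC n m f (by omega)
      rw [← hkey] at this
      simp only [Polynomial.coeff_add, add_mul] at this
      rw [Finset.sum_add_distrib, hΦ1, hΦ2, add_zero] at this
      exact this.symm
    -- all coordinates vanish
    have hall : ∀ j, f j = 0 := by
      intro j
      induction j using Nat.strong_induction_on with
      | _ j ih =>
        by_cases hjn : j < n
        · by_cases hjk : j < k
          · exact key1 j hjk
          · have hs : (j - k) + k < n := by omega
            have hrec := rec1 (j - k) hs
            rw [Finset.sum_range_succ] at hrec
            have hterm : ∀ i ∈ Finset.range k, p1.coeff i * f (j - k + i) = 0 := by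
              intro i hi
              simp only [Finset.mem_range] at hi
              rw [ih (j - k + i) (by omega), mul_zero]
            rw [Finset.sum_eq_zero hterm, zero_add] at hrec
            have heq : j - k + k = j := by omega
            have hlead : p1.coeff k = 1 := by
              rw [← hdeg1]; exact hmon1.coeff_natDegree
            rwa [heq, hlead, one_mul] at hrec
        · simp only [hf, extFun]
          rw [dif_neg hjn]
    funext x
    have := hall x.1
    simp only [hf, extFun] at this
    rw [dif_pos x.isLt] at this
    simpa using this
  · rintro rfl
    constructor <;> intro j hj <;>
      exact Finset.sum_eq_zero fun i _ => by simp
end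

section
/- Let k ≥ 1, n ≥ 2k and d be natural numbers. If Σ_{j=1}^{d} C(n,j) < φ(2^k − 1)/k, then there exists a primitive polynomial p of degree k over GF(2) such that the truncated PR code S(p,n) has minimum Hamming weight greater than d, i.e., every nonzero codeword c ∈ S(p,n) satisfies w(c) > d. -/
open Polynomial Finset IntermediateField in
theorem exists_pb {k : ℕ} (hk : k ≠ 0) (α : GaloisField 2 k) (hα : orderOf α = 2 ^ k - 1) :
    ∃ pb : PowerBasis (ZMod 2) (GaloisField 2 k), pb.gen = α ∧ pb.dim = k := by
  have h1 : (1:ℕ) ≤ 2 ^ k - 1 := by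
    have : 2 ^ 1 ≤ 2 ^ k := Nat.pow_le_pow_right (by norm_num) (Nat.one_le_iff_ne_zero.mpr hk)
    omega
  have hα0 : α ≠ 0 := by
    intro h
    have h2 := pow_orderOf_eq_one α
    rw [hα, h, zero_pow (by omega)] at h2
    exact zero_ne_one h2
  classical
  haveI : Fintype (GaloisField 2 k) := Fintype.ofFinite _
  have hcard : Fintype.card (GaloisField 2 k) = 2 ^ k := by
    rw [← Nat.card_eq_fintype_card]; exact GaloisField.card 2 k hk
  have hu : orderOf (Units.mk0 α hα0) = 2 ^ k - 1 := by rw [← orderOf_units]; exact hα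
  have htopu : Subgroup.zpowers (Units.mk0 α hα0) = ⊤ := by
    apply Subgroup.eq_top_of_card_eq
    rw [Nat.card_zpowers, hu, Nat.card_eq_fintype_card, Fintype.card_units, hcard]
  have hpow : ∀ x : GaloisField 2 k, x ≠ 0 → ∃ m : ℕ, α ^ m = x := by
    intro x hx
    have hxmem : Units.mk0 x hx ∈ Subgroup.zpowers (Units.mk0 α hα0) := by rw [htopu]; trivial
    rw [← mem_powers_iff_mem_zpowers] at hxmem
    obtain ⟨m, hm⟩ := hxmem
    exact ⟨m, by
      have h3 := congrArg (Units.val) hm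
      simpa using h3⟩
  have hint : IsIntegral (ZMod 2) α := IsIntegral.of_finite _ _
  have htop : (ZMod 2)⟮α⟯ = (⊤ : IntermediateField (ZMod 2) (GaloisField 2 k)) := by
    ext x
    simp only [IntermediateField.mem_top, iff_true]
    rcases eq_or_ne x 0 with rfl | hx
    · exact zero_mem _
    · obtain ⟨m, hm⟩ := hpow x hx
      exact hm ▸ pow_mem (mem_adjoin_simple_self (ZMod 2) α) m
  let e : (ZMod 2)⟮α⟯ ≃ₐ[ZMod 2] GaloisField 2 k :=
    (equivOfEq htop).trans topEquiv
  refine ⟨(adjoin.powerBasis hint).map e, ?_, ?_⟩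
  · rfl
  · have h1' := PowerBasis.finrank ((adjoin.powerBasis hint).map e)
    rw [GaloisField.finrank 2 hk] at h1'
    exact h1'.symm


theorem trace_eq_zero {k : ℕ} (hk : k ≠ 0) (pb : PowerBasis (ZMod 2) (GaloisField 2 k))
    (hdim : pb.dim = k) (δ : GaloisField 2 k)
    (h : ∀ i < k, Algebra.trace (ZMod 2) (GaloisField 2 k) (δ * pb.gen ^ i) = 0) : δ = 0 := by
  apply (traceForm_nondegenerate (ZMod 2) (GaloisField 2 k)).1 δ
  have hmap : (Algebra.traceForm (ZMod 2) (GaloisField 2 k)) δ = 0 := by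
    apply pb.basis.ext
    intro i
    rw [pb.basis_eq_pow]
    simp only [Algebra.traceForm_apply, LinearMap.zero_apply]
    exact h i (lt_of_lt_of_le i.2 (le_of_eq hdim))
  intro y
  rw [hmap]
  rfl

theorem exists_gamma {k : ℕ} (hk : k ≠ 0) (pb : PowerBasis (ZMod 2) (GaloisField 2 k))
    (hdim : pb.dim = k) (v : Fin k → ZMod 2) :
    ∃ γ : GaloisField 2 k, ∀ i : Fin k,
      Algebra.trace (ZMod 2) (GaloisField 2 k) (γ * pb.gen ^ (i : ℕ)) = v i := by
  let Φ : GaloisField 2 k →ₗ[ZMod 2] (Fin k → ZMod 2) :=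
    LinearMap.pi fun i : Fin k =>
      (Algebra.traceForm (ZMod 2) (GaloisField 2 k)).flip (pb.gen ^ (i : ℕ))
  have hker : LinearMap.ker Φ = ⊥ := by
    rw [LinearMap.ker_eq_bot']
    intro γ hγ
    apply trace_eq_zero hk pb hdim
    intro i hi
    have h2 := congrFun hγ ⟨i, hi⟩
    simpa [Φ, Algebra.traceForm_apply] using h2
  have hfr : Module.finrank (ZMod 2) (GaloisField 2 k)
      = Module.finrank (ZMod 2) (Fin k → ZMod 2) := by
    rw [GaloisField.finrank 2 hk, Module.finrank_fin_fun]
  have hrange := (LinearMap.ker_eq_bot_iff_range_eq_top_of_finrank_eq_finrank hfr).mp hker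
  have hsurj : Function.Surjective Φ := LinearMap.range_eq_top.mp hrange
  obtain ⟨γ, hγ⟩ := hsurj v
  exact ⟨γ, fun i => by
    have h2 := congrFun hγ i
    simpa [Φ, Algebra.traceForm_apply] using h2⟩

theorem PRcode_sub {k n : ℕ} {p : Polynomial (ZMod 2)} {c c' : Fin n → ZMod 2}
    (hc : c ∈ PRcode k p n) (hc' : c' ∈ PRcode k p n) : c - c' ∈ PRcode k p n := by
  intro j hj
  have h1 := hc j hj
  have h2 := hc' j hj
  have key : ∀ i ∈ Finset.range (k + 1),
      p.coeff i * (if h : j + i < n then (c - c') ⟨j + i, h⟩ else 0)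
      = p.coeff i * (if h : j + i < n then c ⟨j + i, h⟩ else 0)
        - p.coeff i * (if h : j + i < n then c' ⟨j + i, h⟩ else 0) := by
    intro i _
    split
    · simp [Pi.sub_apply, mul_sub]
    · simp
  rw [Finset.sum_congr rfl key, Finset.sum_sub_distrib, h1, h2, sub_zero]

theorem PRcode_eq_zero {k n : ℕ} {p : Polynomial (ZMod 2)} (hpk : p.coeff k = 1)
    {c : Fin n → ZMod 2} (hc : c ∈ PRcode k p n)
    (h0 : ∀ i : Fin n, (i : ℕ) < k → c i = 0) : c = 0 := by
  have key : ∀ m, ∀ hm : m < n, c ⟨m, hm⟩ = 0 := by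
    intro m
    induction m using Nat.strong_induction_on with
    | _ m ih =>
      intro hm
      by_cases hmk : m < k
      · exact h0 ⟨m, hm⟩ hmk
      · push_neg at hmk
        have hjk : (m - k) + k = m := Nat.sub_add_cancel hmk
        have hrec := hc (m - k) (by omega)
        rw [Finset.sum_range_succ] at hrec
        have hzero : ∀ i ∈ Finset.range k,
            p.coeff i * (if h : (m - k) + i < n then c ⟨(m - k) + i, h⟩ else 0) = 0 := by
          intro i hi
          rw [Finset.mem_range] at hi
          have hlt : (m - k) + i < n := by omega
          rw [dif_pos hlt, ih ((m - k) + i) (by omega) hlt, mul_zero]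
        rw [Finset.sum_eq_zero hzero, zero_add,
          dif_pos (by omega : (m - k) + k < n), hpk, one_mul] at hrec
        have heq : (⟨(m - k) + k, by omega⟩ : Fin n) = ⟨m, hm⟩ := by simp [hjk]
        rwa [heq] at hrec
  funext i
  simpa using key i i.2

theorem trace_repr {k n : ℕ} (hk : k ≠ 0) (hkn : k ≤ n)
    (pb : PowerBasis (ZMod 2) (GaloisField 2 k)) (hdim : pb.dim = k)
    {c : Fin n → ZMod 2} (hc : c ∈ PRcode k (minpoly (ZMod 2) pb.gen) n) :
    ∃ γ : GaloisField 2 k, ∀ i : Fin n,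
      c i = Algebra.trace (ZMod 2) (GaloisField 2 k) (γ * pb.gen ^ (i : ℕ)) := by
  set p := minpoly (ZMod 2) pb.gen with hp
  have hpdeg : p.natDegree = k := by rw [hp, pb.natDegree_minpoly, hdim]
  have hpmonic : p.Monic := minpoly.monic (IsIntegral.of_finite _ _)
  have hpk : p.coeff k = 1 := by
    have h2 := hpmonic.coeff_natDegree
    rwa [hpdeg] at h2
  obtain ⟨γ, hγ⟩ := exists_gamma hk pb hdim (fun i => c ⟨i, lt_of_lt_of_le i.2 hkn⟩)
  set c' : Fin n → ZMod 2 :=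
    fun i => Algebra.trace (ZMod 2) (GaloisField 2 k) (γ * pb.gen ^ (i : ℕ)) with hc'def
  have hc' : c' ∈ PRcode k p n := by
    intro j hj
    have hterm : ∀ i ∈ Finset.range (k + 1),
        p.coeff i * (if h : j + i < n then c' ⟨j + i, h⟩ else 0)
        = Algebra.trace (ZMod 2) (GaloisField 2 k)
            (p.coeff i • ((γ * pb.gen ^ j) * pb.gen ^ i)) := by
      intro i hi
      rw [Finset.mem_range, Nat.lt_succ_iff] at hi
      have hlt : j + i < n := by omega
      rw [dif_pos hlt]
      simp only [hc'def]
      rw [map_smul, mul_assoc, ← pow_add]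
      simp [smul_eq_mul]
    rw [Finset.sum_congr rfl hterm, ← map_sum]
    have hmul : ∑ i ∈ Finset.range (k + 1), p.coeff i • ((γ * pb.gen ^ j) * pb.gen ^ i)
        = (γ * pb.gen ^ j) * ∑ i ∈ Finset.range (k + 1), p.coeff i • pb.gen ^ i := by
      rw [Finset.mul_sum]
      exact Finset.sum_congr rfl fun i _ => (mul_smul_comm _ _ _).symm
    rw [hmul]
    have haev : ∑ i ∈ Finset.range (k + 1), p.coeff i • pb.gen ^ i = 0 := by
      have h2 := Polynomial.aeval_eq_sum_range (p := p) pb.gen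
      rw [hpdeg] at h2
      rw [← h2, minpoly.aeval]
    rw [haev, mul_zero, map_zero]
  have hsub := PRcode_sub hc hc'
  have h0 : ∀ i : Fin n, (i : ℕ) < k → (c - c') i = 0 := by
    intro i hi
    have h1 : c' i = c i := by
      have h2 := hγ ⟨(i : ℕ), hi⟩
      simp only [hc'def]
      rw [h2]
    simp [Pi.sub_apply, h1]
  have hzero := PRcode_eq_zero hpk hsub h0
  refine ⟨γ, fun i => ?_⟩
  have hdiff := congrFun hzero i
  simp only [Pi.sub_apply, Pi.zero_apply, sub_eq_zero] at hdiff
  exact hdiff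

theorem key_distinct {k n : ℕ} (hk : k ≠ 0) (hn2 : 2 * k ≤ n)
    {α β : GaloisField 2 k} (hα : orderOf α = 2 ^ k - 1) (hβ : orderOf β = 2 ^ k - 1)
    {c : Fin n → ZMod 2}
    (hcα : c ∈ PRcode k (minpoly (ZMod 2) α) n)
    (hcβ : c ∈ PRcode k (minpoly (ZMod 2) β) n)
    (hc0 : c ≠ 0) : minpoly (ZMod 2) α = minpoly (ZMod 2) β := by
  obtain ⟨pb, hgen, hdim⟩ := exists_pb hk α hα
  obtain ⟨pbβ, hgenβ, hdimβ⟩ := exists_pb hk β hβ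
  have hkn : k ≤ n := by omega
  obtain ⟨γ, hγ⟩ := trace_repr hk hkn pb hdim (by rw [hgen]; exact hcα)
  rw [hgen] at hγ
  have hγ0 : γ ≠ 0 := by
    rintro rfl
    apply hc0
    funext i
    rw [hγ i]
    simp
  set q := minpoly (ZMod 2) β with hq
  have hqdeg : q.natDegree = k := by rw [hq, ← hgenβ, pbβ.natDegree_minpoly, hdimβ]
  have hδ : Polynomial.aeval α q = 0 := by
    have htr : ∀ j < k, Algebra.trace (ZMod 2) (GaloisField 2 k)
        ((γ * Polynomial.aeval α q) * α ^ j) = 0 := by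
      intro j hj
      have hrec := hcβ j (by omega)
      have hterm : ∀ i ∈ Finset.range (k + 1),
          q.coeff i * (if h : j + i < n then c ⟨j + i, h⟩ else 0)
          = Algebra.trace (ZMod 2) (GaloisField 2 k)
              (q.coeff i • ((γ * α ^ j) * α ^ i)) := by
        intro i hi
        rw [Finset.mem_range, Nat.lt_succ_iff] at hi
        have hlt : j + i < n := by omega
        rw [dif_pos hlt, hγ ⟨j + i, hlt⟩]
        rw [map_smul, mul_assoc, ← pow_add]
        simp [smul_eq_mul]
      rw [Finset.sum_congr rfl hterm, ← map_sum] at hrec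
      have heq : ∑ i ∈ Finset.range (k + 1), q.coeff i • ((γ * α ^ j) * α ^ i)
          = (γ * Polynomial.aeval α q) * α ^ j := by
        have hmul : ∑ i ∈ Finset.range (k + 1), q.coeff i • ((γ * α ^ j) * α ^ i)
            = (γ * α ^ j) * ∑ i ∈ Finset.range (k + 1), q.coeff i • α ^ i := by
          rw [Finset.mul_sum]
          exact Finset.sum_congr rfl fun i _ => (mul_smul_comm _ _ _).symm
        rw [hmul]
        have h2 := Polynomial.aeval_eq_sum_range (p := q) α
        rw [hqdeg] at h2
        rw [← h2]
        ring
      rw [heq] at hrec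
      exact hrec
    have h3 := trace_eq_zero hk pb hdim (γ * Polynomial.aeval α q) (by rw [hgen]; exact htr)
    rcases mul_eq_zero.mp h3 with h | h
    · exact absurd h hγ0
    · exact h
  have hdvd : minpoly (ZMod 2) α ∣ q := minpoly.dvd _ _ hδ
  have hpirr := minpoly.irreducible (IsIntegral.of_finite (ZMod 2) α)
  have hqirr := minpoly.irreducible (IsIntegral.of_finite (ZMod 2) β)
  have hassoc := hpirr.associated_of_dvd hqirr hdvd
  exact Polynomial.eq_of_monic_of_associated (minpoly.monic (IsIntegral.of_finite _ _))
    (minpoly.monic (IsIntegral.of_finite _ _)) hassoc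

theorem exists_P {k : ℕ} (hk : k ≠ 0) :
    ∃ P : Finset (Polynomial (ZMod 2)), (∀ p ∈ P, IsPrimitivePoly k p) ∧
      Nat.totient (2 ^ k - 1) ≤ k * P.card := by
  classical
  haveI : Fintype (GaloisField 2 k) := Fintype.ofFinite _
  have hcard : Fintype.card (GaloisField 2 k) = 2 ^ k := by
    rw [← Nat.card_eq_fintype_card]; exact GaloisField.card 2 k hk
  have hcardu : Fintype.card (GaloisField 2 k)ˣ = 2 ^ k - 1 := by
    rw [Fintype.card_units, hcard]
  set A : Finset (GaloisField 2 k) :=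
    Finset.univ.filter (fun x => orderOf x = 2 ^ k - 1) with hA
  set P : Finset (Polynomial (ZMod 2)) := A.image (fun α => minpoly (ZMod 2) α) with hP
  refine ⟨P, ?_, ?_⟩
  · intro p hp
    obtain ⟨α, hαA, hαp⟩ := Finset.mem_image.mp hp
    rw [hA, Finset.mem_filter] at hαA
    exact ⟨α, hαA.2, hαp.symm⟩
  · have hU : (Finset.univ.filter
        (fun u : (GaloisField 2 k)ˣ => orderOf u = 2 ^ k - 1)).card
        = Nat.totient (2 ^ k - 1) :=
      IsCyclic.card_orderOf_eq_totient (by rw [hcardu])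
    have hUA : (Finset.univ.filter
        (fun u : (GaloisField 2 k)ˣ => orderOf u = 2 ^ k - 1)).card ≤ A.card := by
      refine Finset.card_le_card_of_injOn (fun u => (u : GaloisField 2 k)) ?_ ?_
      · intro u hu
        simp only [Finset.mem_coe, Finset.mem_filter, Finset.mem_univ, true_and] at hu
        rw [hA, Finset.mem_coe, Finset.mem_filter]
        exact ⟨Finset.mem_univ _, by rw [orderOf_units]; exact hu⟩
      · intro a _ b _ hab
        exact Units.ext hab
    have hAP : A.card ≤ k * P.card := by
      apply Finset.card_le_mul_card_image
      intro p hp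
      obtain ⟨α₀, hα₀A, hα₀p⟩ := Finset.mem_image.mp hp
      have hint : IsIntegral (ZMod 2) α₀ := IsIntegral.of_finite _ _
      have hp0 : p ≠ 0 := hα₀p ▸ minpoly.ne_zero hint
      have hpdeg : p.natDegree ≤ k := by
        rw [← hα₀p]
        have h2 := minpoly.natDegree_le (A := ZMod 2) α₀
        rwa [GaloisField.finrank 2 hk] at h2
      have hpm0 : p.map (algebraMap (ZMod 2) (GaloisField 2 k)) ≠ 0 :=
        (Polynomial.map_ne_zero_iff (algebraMap (ZMod 2) (GaloisField 2 k)).injective).mpr hp0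
      calc (A.filter (fun x => minpoly (ZMod 2) x = p)).card
          ≤ (p.map (algebraMap (ZMod 2) (GaloisField 2 k))).roots.toFinset.card := by
            apply Finset.card_le_card
            intro x hx
            rw [Finset.mem_filter] at hx
            rw [Multiset.mem_toFinset, Polynomial.mem_roots hpm0]
            have : Polynomial.aeval x p = 0 := by
              rw [← hx.2]; exact minpoly.aeval _ _
            rwa [Polynomial.IsRoot, Polynomial.eval_map, ← Polynomial.aeval_def]
        _ ≤ Multiset.card (p.map (algebraMap (ZMod 2) (GaloisField 2 k))).roots :=
            Multiset.toFinset_card_le _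
        _ ≤ (p.map (algebraMap (ZMod 2) (GaloisField 2 k))).natDegree :=
            Polynomial.card_roots' _
        _ = p.natDegree := Polynomial.natDegree_map _
        _ ≤ k := hpdeg
    omega


theorem card_le_sum {n d : ℕ} (S : Finset (Fin n → ZMod 2))
    (hS : ∀ c ∈ S, c ≠ 0 ∧ hammingNorm c ≤ d) :
    S.card ≤ ∑ j ∈ Finset.Icc 1 d, Nat.choose n j := by
  classical
  have key : S.card ≤ ((Finset.Icc 1 d).biUnion
      (fun j => Finset.powersetCard j (Finset.univ : Finset (Fin n)))).card := by
    refine Finset.card_le_card_of_injOn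
      (fun c => Finset.univ.filter (fun i => c i ≠ 0)) ?_ ?_
    · intro c hc
      obtain ⟨hc0, hcd⟩ := hS c hc
      have hnorm : hammingNorm c = (Finset.univ.filter (fun i => c i ≠ 0)).card := by
        simp [hammingNorm]
      rw [Finset.mem_coe, Finset.mem_biUnion]
      obtain ⟨i0, hi0⟩ := Function.ne_iff.mp hc0
      refine ⟨(Finset.univ.filter (fun i => c i ≠ 0)).card, ?_, ?_⟩
      · rw [Finset.mem_Icc]
        constructor
        · refine Finset.card_pos.mpr ⟨i0, ?_⟩
          simp only [Finset.mem_filter, Finset.mem_univ, true_and]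
          simpa using hi0
        · rw [← hnorm]; exact hcd
      · exact Finset.mem_powersetCard.mpr ⟨Finset.subset_univ _, rfl⟩
    · intro a ha b hb hab
      funext i
      have h2 : ∀ x : ZMod 2, x = 0 ∨ x = 1 := by decide
      have h3 := Finset.ext_iff.mp hab i
      simp only [Finset.mem_filter, Finset.mem_univ, true_and] at h3
      rcases h2 (a i) with h | h <;> rcases h2 (b i) with h' | h' <;> simp_all
  refine le_trans key ?_
  rw [Finset.card_biUnion]
  · apply le_of_eq
    apply Finset.sum_congr rfl
    intro j _
    rw [Finset.card_powersetCard, Finset.card_univ, Fintype.card_fin]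
  · intro x _ y _ hxy
    simp only [Finset.disjoint_left]
    intro s hs hs'
    rw [Finset.mem_powersetCard] at hs hs'
    exact hxy (hs.2.symm.trans hs'.2)

theorem stmt7 (k n d : ℕ) (hk : 1 ≤ k) (hn : 2 * k ≤ n)
    (hsum : ∑ j ∈ Finset.Icc 1 d, Nat.choose n j < Nat.totient (2 ^ k - 1) / k) :
    ∃ p : Polynomial (ZMod 2), IsPrimitivePoly k p ∧
      ∀ c ∈ PRcode k p n, c ≠ 0 → d < hammingNorm c := by
  by_contra hcon
  push_neg at hcon
  classical
  have hk0 : k ≠ 0 := by omega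
  obtain ⟨P, hPprim, hPcard⟩ := exists_P hk0
  set f : Polynomial (ZMod 2) → (Fin n → ZMod 2) := fun p =>
    if hp : IsPrimitivePoly k p then (hcon p hp).choose else 0 with hf
  have hfspec : ∀ p, ∀ hp : IsPrimitivePoly k p,
      f p ∈ PRcode k p n ∧ f p ≠ 0 ∧ hammingNorm (f p) ≤ d := by
    intro p hp
    simp only [hf, dif_pos hp]
    obtain ⟨h1, h2, h3⟩ := (hcon p hp).choose_spec
    exact ⟨h1, h2, h3⟩
  have hinj : Set.InjOn f ↑P := by
    intro p hp q hq hfpq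
    obtain ⟨αp, hαp, hpe⟩ := hPprim p (by simpa using hp)
    obtain ⟨αq, hαq, hqe⟩ := hPprim q (by simpa using hq)
    have h1 := hfspec p ⟨αp, hαp, hpe⟩
    have h2 := hfspec q ⟨αq, hαq, hqe⟩
    have hc1 : f p ∈ PRcode k (minpoly (ZMod 2) αp) n := by rw [← hpe]; exact h1.1
    have hc2 : f p ∈ PRcode k (minpoly (ZMod 2) αq) n := by rw [← hqe, hfpq]; exact h2.1
    rw [hpe, hqe]
    exact key_distinct hk0 hn hαp hαq hc1 hc2 h1.2.1
  have hcard1 : P.card = (P.image f).card := (Finset.card_image_of_injOn hinj).symm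
  have hcard2 : (P.image f).card ≤ ∑ j ∈ Finset.Icc 1 d, Nat.choose n j := by
    apply card_le_sum
    intro c hc
    obtain ⟨p, hp, rfl⟩ := Finset.mem_image.mp hc
    obtain ⟨αp, hαp, hpe⟩ := hPprim p hp
    have h1 := hfspec p ⟨αp, hαp, hpe⟩
    exact ⟨h1.2.1, h1.2.2⟩
  have hfinal : Nat.totient (2 ^ k - 1) / k ≤ P.card := by
    calc Nat.totient (2 ^ k - 1) / k ≤ (k * P.card) / k := Nat.div_le_div_right hPcard
    _ = P.card := Nat.mul_div_cancel_left _ (by omega)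
  omega
end

section
/- Let α be an element of the finite field GF(2^k) of multiplicative order 2^k − 1, let p be its minimal polynomial over GF(2) (so p is primitive of degree k), let f : GF(2^k) → GF(2) be a nonzero GF(2)-linear map, and let n ≥ k. Then the truncated PR code S(p,n) equals the set { (f(β·α^0), f(β·α^1), …, f(β·α^{n−1})) : β ∈ GF(2^k) }, and the map sending β ∈ GF(2^k) to the vector (f(β·α^i))_{0 ≤ i < n} is injective. -/
section Aux

open Polynomial IntermediateField

variable {k : ℕ}

lemma aux_ne_zero (hk : 1 ≤ k) (α : GaloisField 2 k) (hα : orderOf α = 2 ^ k - 1) :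
    α ≠ 0 := by
  intro h
  have hpos : 2 ^ k - 1 ≠ 0 := by
    have : 2 ≤ 2 ^ k := by
      calc 2 = 2 ^ 1 := rfl
      _ ≤ 2 ^ k := Nat.pow_le_pow_right (by norm_num) hk
    omega
  have h1 : α ^ (2 ^ k - 1) = 1 := by rw [← hα]; exact pow_orderOf_eq_one α
  rw [h, zero_pow hpos] at h1
  exact zero_ne_one h1

lemma aux_adjoin_top (hk : 1 ≤ k) (α : GaloisField 2 k) (hα : orderOf α = 2 ^ k - 1) :
    IntermediateField.adjoin (ZMod 2) {α} = ⊤ := by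
  rw [eq_top_iff]
  intro x _
  by_cases hx : x = 0
  · rw [hx]; exact zero_mem _
  have hα0 : α ≠ 0 := aux_ne_zero hk α hα
  set u : (GaloisField 2 k)ˣ := Units.mk0 α hα0 with hu
  have hcardF : Nat.card (GaloisField 2 k) = 2 ^ k := GaloisField.card 2 k (by omega)
  have hcard : Nat.card (GaloisField 2 k)ˣ = 2 ^ k - 1 := by
    rw [Nat.card_units, hcardF]
  have horder : orderOf u = 2 ^ k - 1 := by
    rw [← orderOf_units]; exact hα
  have htop : Subgroup.zpowers u = ⊤ := by
    apply Subgroup.eq_top_of_card_eq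
    rw [Nat.card_zpowers, horder, hcard]
  have hxmem : Units.mk0 x hx ∈ Submonoid.powers u := by
    rw [mem_powers_iff_mem_zpowers, htop]
    trivial
  obtain ⟨m, hm⟩ := hxmem
  have : x = α ^ m := by
    have := congrArg (Units.val) hm
    simpa [hu] using this.symm
  rw [this]
  exact pow_mem (IntermediateField.mem_adjoin_simple_self (ZMod 2) α) m

lemma aux_deg (hk : 1 ≤ k) (α : GaloisField 2 k) (hα : orderOf α = 2 ^ k - 1) :
    (minpoly (ZMod 2) α).natDegree = k := by
  have hint : IsIntegral (ZMod 2) α := .of_finite _ _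
  have h1 := IntermediateField.adjoin.finrank hint
  rw [show (ZMod 2)⟮α⟯ = ⊤ from aux_adjoin_top hk α hα, IntermediateField.finrank_top',
    GaloisField.finrank 2 (by omega)] at h1
  exact h1.symm

end Aux

theorem stmt10 (k n : ℕ) (hk : 1 ≤ k) (hn : k ≤ n)
    (α : GaloisField 2 k) (hα : orderOf α = 2 ^ k - 1)
    (p : Polynomial (ZMod 2)) (hp : p = minpoly (ZMod 2) α)
    (f : GaloisField 2 k →ₗ[ZMod 2] ZMod 2) (hf : f ≠ 0) :
    PRcode k p n =
      {c : Fin n → ZMod 2 | ∃ β : GaloisField 2 k, c = fun i : Fin n => f (β * α ^ (i : ℕ))} ∧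
    Function.Injective
      (fun (β : GaloisField 2 k) => (fun i : Fin n => f (β * α ^ (i : ℕ)))) := by
  have hα0 : α ≠ 0 := aux_ne_zero hk α hα
  have hint : IsIntegral (ZMod 2) α := .of_finite _ _
  have hdeg : p.natDegree = k := by rw [hp]; exact aux_deg hk α hα
  have hmonic : p.Monic := hp ▸ minpoly.monic hint
  have hck : p.coeff k = 1 := by rw [← hdeg]; exact hmonic.coeff_natDegree
  -- the basis of powers of α
  haveI : Nonempty (Fin k) := ⟨⟨0, hk⟩⟩
  have li : LinearIndependent (ZMod 2) fun i : Fin k => α ^ (i : ℕ) := by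
    have h := linearIndependent_pow (K := ZMod 2) α
    rwa [show (minpoly (ZMod 2) α).natDegree = k from aux_deg hk α hα] at h
  let b : Module.Basis (Fin k) (ZMod 2) (GaloisField 2 k) :=
    basisOfLinearIndependentOfCardEqFinrank li
      (by rw [Fintype.card_fin, GaloisField.finrank 2 (by omega)])
  have hb : ∀ i : Fin k, b i = α ^ (i : ℕ) := fun i =>
    congrFun (coe_basisOfLinearIndependentOfCardEqFinrank li _) i
  -- kernel lemma
  have hker : ∀ β : GaloisField 2 k, (∀ i : Fin n, f (β * α ^ (i : ℕ)) = 0) → β = 0 := by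
    intro β h0
    by_contra hβ
    have hcomp : f ∘ₗ LinearMap.mulLeft (ZMod 2) β = 0 := by
      apply b.ext
      intro i
      simp only [LinearMap.comp_apply, LinearMap.mulLeft_apply, LinearMap.zero_apply, hb i]
      exact h0 ⟨i, lt_of_lt_of_le i.2 hn⟩
    apply hf
    ext x
    have := LinearMap.congr_fun hcomp (β⁻¹ * x)
    simp only [LinearMap.comp_apply, LinearMap.mulLeft_apply, LinearMap.zero_apply] at this
    rw [← mul_assoc, mul_inv_cancel₀ hβ, one_mul] at this
    simpa using this
  -- injectivity
  have hinj : Function.Injective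
      (fun (β : GaloisField 2 k) => (fun i : Fin n => f (β * α ^ (i : ℕ)))) := by
    intro β₁ β₂ h
    have h0 : ∀ i : Fin n, f ((β₁ - β₂) * α ^ (i : ℕ)) = 0 := by
      intro i
      rw [sub_mul, map_sub, sub_eq_zero]
      exact congrFun h i
    exact sub_eq_zero.mp (hker _ h0)
  refine ⟨?_, hinj⟩
  set g : GaloisField 2 k → (Fin n → ZMod 2) :=
    fun β => fun i : Fin n => f (β * α ^ (i : ℕ)) with hg
  -- RHS ⊆ PRcode
  have hsub : {c : Fin n → ZMod 2 |
      ∃ β : GaloisField 2 k, c = fun i : Fin n => f (β * α ^ (i : ℕ))} ⊆ PRcode k p n := by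
    rintro c ⟨β, rfl⟩
    intro j hjk
    have hlt : ∀ i ∈ Finset.range (k + 1), j + i < n := by
      intro i hi
      rw [Finset.mem_range] at hi
      omega
    calc ∑ i ∈ Finset.range (k + 1), p.coeff i *
          (if h : j + i < n then f (β * α ^ ((⟨j + i, h⟩ : Fin n) : ℕ)) else 0)
        = ∑ i ∈ Finset.range (k + 1), f (p.coeff i • (β * α ^ j * α ^ i)) := by
          refine Finset.sum_congr rfl fun i hi => ?_
          rw [dif_pos (hlt i hi)]
          simp only [map_smul, smul_eq_mul, pow_add, ← mul_assoc]
      _ = f (β * α ^ j * ∑ i ∈ Finset.range (k + 1), p.coeff i • α ^ i) := by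
          rw [← map_sum, Finset.mul_sum]
          congr 1
          exact Finset.sum_congr rfl fun i _ => (mul_smul_comm _ _ _).symm
      _ = 0 := by
          have haev : (Polynomial.aeval α) p = 0 := hp ▸ minpoly.aeval (ZMod 2) α
          rw [Polynomial.aeval_eq_sum_range, hdeg] at haev
          rw [haev, mul_zero, map_zero]
  -- PRcode is determined by the first k coordinates
  have hdet : ∀ c c' : Fin n → ZMod 2, c ∈ PRcode k p n → c' ∈ PRcode k p n →
      (∀ i : Fin n, (i : ℕ) < k → c i = c' i) → c = c' := by
    intro c c' hc hc' hagree
    have claim : ∀ m, ∀ hm : m < n, c ⟨m, hm⟩ = c' ⟨m, hm⟩ := by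
      intro m
      induction m using Nat.strong_induction_on with
      | _ m ih =>
        intro hm
        by_cases hmk : m < k
        · exact hagree ⟨m, hm⟩ hmk
        · push_neg at hmk
          set j := m - k with hj
          have hjk : j + k = m := by omega
          have h1 := hc j (by omega)
          have h2 := hc' j (by omega)
          rw [Finset.sum_range_succ, hjk, dif_pos hm, hck, one_mul] at h1 h2
          have hS : ∑ i ∈ Finset.range k, p.coeff i *
                (if h : j + i < n then c ⟨j + i, h⟩ else 0)
              = ∑ i ∈ Finset.range k, p.coeff i *
                (if h : j + i < n then c' ⟨j + i, h⟩ else 0) := by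
            refine Finset.sum_congr rfl fun i hi => ?_
            rw [Finset.mem_range] at hi
            have hji : j + i < n := by omega
            rw [dif_pos hji, dif_pos hji, ih (j + i) (by omega) hji]
          rw [hS] at h1
          exact add_left_cancel (h1.trans h2.symm)
    funext i
    obtain ⟨m, hm⟩ := i
    exact claim m hm
  -- cardinality argument
  have hrange : {c : Fin n → ZMod 2 |
      ∃ β : GaloisField 2 k, c = fun i : Fin n => f (β * α ^ (i : ℕ))} = Set.range g := by
    ext c
    constructor
    · rintro ⟨β, rfl⟩; exact ⟨β, rfl⟩
    · rintro ⟨β, rfl⟩; exact ⟨β, rfl⟩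
  have hcard1 : (Set.range g).ncard = 2 ^ k := by
    rw [← Nat.card_coe_set_eq, Nat.card_range_of_injective hinj,
      GaloisField.card 2 k (by omega)]
  have hcard2 : (PRcode k p n).ncard ≤ 2 ^ k := by
    have hr : (PRcode k p n).ncard ≤ (Set.univ : Set (Fin k → ZMod 2)).ncard := by
      apply Set.ncard_le_ncard_of_injOn
        (fun c => fun i : Fin k => c ⟨i, lt_of_lt_of_le i.2 hn⟩)
        (fun a _ => Set.mem_univ _)
      · intro c hc c' hc' hcc
        apply hdet c c' hc hc'
        intro i hi
        have := congrFun hcc ⟨(i : ℕ), hi⟩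
        simpa using this
    rw [Set.ncard_univ, Nat.card_eq_fintype_card] at hr
    simpa using hr
  refine (Set.eq_of_subset_of_ncard_le hsub ?_ (Set.toFinite _)).symm
  rw [hrange, hcard1]
  exact hcard2
end
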